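/- Let M be a finite Frobenius bimodule over a finite ring R, C a left R-submodule of M^n, and f : C → M^n an injective left R-linear map. Then f extends to a left R-linear automorphism of M^n; equivalently, there exists U ∈ GL_n(R) with f(x) = xU for all x ∈ C. -/

import Mathlib

open MulOpposite

/-- `χ` is a (two-sided) generating character of the finite `(R,R)`-bimodule `M`:
the map `r ↦ r·χ` (where `(r·χ)(v) = χ(v·r)`, using the right action of `R` on `M`)
and the map `r ↦ χ·r` (where `(χ·r)(v) = χ(r·v)`) are bijections from `R` onto the
character group `M̂`, i.e. `M̂` is free of rank one as a left and as a right `R`-module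
with basis `χ`. -/
def IsGenChar (R M : Type*) [Ring R] [AddCommGroup M]
    [Module R M] [Module Rᵐᵒᵖ M] (χ : AddChar M ℂˣ) : Prop :=
  (Function.Injective fun r : R => fun v : M => χ (op r • v)) ∧
  (∀ ψ : AddChar M ℂˣ, ∃ r : R, ∀ v : M, ψ v = χ (op r • v)) ∧
  (Function.Injective fun r : R => fun v : M => χ (r • v)) ∧
  (∀ ψ : AddChar M ℂˣ, ∃ r : R, ∀ v : M, ψ v = χ (r • v))

/-- `M` is a Frobenius bimodule over `R`: `_R M ≅ _R R̂` and `M_R ≅ R̂_R`, equivalently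
the character bimodule `M̂` is free of rank one on each side, with a common generator. -/
def IsFrobeniusBimodule (R M : Type*) [Ring R] [AddCommGroup M]
    [Module R M] [Module Rᵐᵒᵖ M] : Prop :=
  ∃ χ : AddChar M ℂˣ, IsGenChar R M χ



open Function


section CharFacts

variable (G : Type*) [AddCommGroup G] [Finite G]

lemma addChar_equiv_self : Nonempty (AddChar G ℂˣ ≃ G) := by
  have h0 : Monoid.exponent (Multiplicative G) ≠ 0 := Monoid.exponent_ne_zero_of_finite
  have : NeZero ((Monoid.exponent (Multiplicative G) : ℕ) : ℂ) :=
    ⟨Nat.cast_ne_zero.mpr h0⟩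
  obtain ⟨e⟩ := CommGroup.monoidHom_mulEquiv_of_hasEnoughRootsOfUnity (Multiplicative G) ℂ
  exact ⟨AddChar.toMonoidHomEquiv.trans (e.toEquiv.trans Multiplicative.toAdd)⟩

lemma addChar_finite : Finite (AddChar G ℂˣ) := by
  obtain ⟨e⟩ := addChar_equiv_self G
  exact Finite.of_equiv G e.symm

lemma card_addChar : Nat.card (AddChar G ℂˣ) = Nat.card G := by
  obtain ⟨e⟩ := addChar_equiv_self G
  exact Nat.card_congr e

variable {G}

lemma exists_addChar_ne_one {a : G} (ha : a ≠ 0) : ∃ ψ : AddChar G ℂˣ, ψ a ≠ 1 := by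
  have h0 : Monoid.exponent (Multiplicative G) ≠ 0 := Monoid.exponent_ne_zero_of_finite
  have : NeZero ((Monoid.exponent (Multiplicative G) : ℕ) : ℂ) :=
    ⟨Nat.cast_ne_zero.mpr h0⟩
  have ha' : (Multiplicative.ofAdd a) ≠ 1 := ha
  obtain ⟨φ, hφ⟩ :=
    CommGroup.exists_apply_ne_one_of_hasEnoughRootsOfUnity (Multiplicative G) ℂ ha'
  exact ⟨AddChar.toMonoidHomEquiv.symm φ, hφ⟩

lemma eq_zero_of_forall_addChar {a : G} (h : ∀ ψ : AddChar G ℂˣ, ψ a = 1) : a = 0 := by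
  by_contra ha
  obtain ⟨ψ, hψ⟩ := exists_addChar_ne_one ha
  exact hψ (h ψ)

/-- restriction of characters to a subgroup, as a group hom -/
def resChar (H : AddSubgroup G) : AddChar G ℂˣ →* AddChar H ℂˣ where
  toFun ψ := ψ.compAddMonoidHom H.subtype
  map_one' := by ext x; rfl
  map_mul' ψ φ := by ext x; rfl

lemma addChar_extend (H : AddSubgroup G) (φ : AddChar H ℂˣ) :
    ∃ ψ : AddChar G ℂˣ, ∀ h : H, ψ (h : G) = φ h := by
  have finG : Finite (AddChar G ℂˣ) := addChar_finite G
  have finH : Finite (AddChar H ℂˣ) := addChar_finite H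
  have finQ : Finite (AddChar (G ⧸ H) ℂˣ) := addChar_finite (G ⧸ H)
  -- the kernel of resChar is in bijection with characters of the quotient
  set res := resChar H with hres
  have hker : Nat.card (res.ker) = Nat.card (G ⧸ H) := by
    rw [← card_addChar (G ⧸ H)]
    refine (Nat.card_congr (Equiv.ofBijective
      (fun φ : AddChar (G ⧸ H) ℂˣ =>
        (⟨φ.compAddMonoidHom (QuotientAddGroup.mk' H), ?_⟩ : res.ker)) ⟨?_, ?_⟩)).symm
    · rw [MonoidHom.mem_ker]
      ext x
      have : (QuotientAddGroup.mk' H) (x : G) = 0 := by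
        simpa [QuotientAddGroup.eq_zero_iff] using x.2
      simp only [hres, resChar, MonoidHom.coe_mk, OneHom.coe_mk,
        AddChar.compAddMonoidHom_apply, AddSubgroup.coe_subtype, this]
      simp
    · intro φ₁ φ₂ h
      have := Subtype.ext_iff.mp h
      exact AddChar.compAddMonoidHom_injective_left _
        (QuotientAddGroup.mk'_surjective H) this
    · rintro ⟨ψ, hψ⟩
      have hψ' : ∀ x ∈ H, ψ.toAddMonoidHom x = 0 := by
        intro x hx
        have : (res ψ) ⟨x, hx⟩ = 1 := by rw [hψ]; rfl
        have : ψ x = 1 := this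
        simpa [AddChar.toAddMonoidHom_apply] using this
      refine ⟨AddChar.toAddMonoidHomEquiv.symm
        (QuotientAddGroup.lift H ψ.toAddMonoidHom hψ'), ?_⟩
      refine Subtype.ext ?_
      exact AddChar.ext _ _ fun x => rfl
  -- counting: the range of res is everything
  have hsurj : Function.Surjective res := by
    have h1 : Nat.card (AddChar G ℂˣ) = Nat.card (AddChar G ℂˣ ⧸ res.ker) * Nat.card res.ker :=
      Subgroup.card_eq_card_quotient_mul_card_subgroup res.ker
    have h2 : Nat.card (AddChar G ℂˣ ⧸ res.ker) = Nat.card res.range :=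
      Nat.card_congr (QuotientGroup.quotientKerEquivRange res).toEquiv
    have h3 : Nat.card G = Nat.card (G ⧸ H) * Nat.card H :=
      AddSubgroup.card_eq_card_quotient_mul_card_addSubgroup H
    have h4 : Nat.card res.range = Nat.card (AddChar H ℂˣ) := by
      have hGne : (Nat.card (G ⧸ H)) ≠ 0 := Nat.card_ne_zero.mpr ⟨inferInstance, inferInstance⟩
      have key : Nat.card (G ⧸ H) * Nat.card ↥H
          = Nat.card (G ⧸ H) * Nat.card res.range := by
        calc Nat.card (G ⧸ H) * Nat.card ↥H = Nat.card G := h3.symm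
        _ = Nat.card (AddChar G ℂˣ) := (card_addChar G).symm
        _ = Nat.card (AddChar G ℂˣ ⧸ res.ker) * Nat.card res.ker := h1
        _ = Nat.card res.range * Nat.card (G ⧸ H) := by rw [h2, hker]
        _ = Nat.card (G ⧸ H) * Nat.card res.range := Nat.mul_comm _ _
      rw [card_addChar H]
      exact (Nat.eq_of_mul_eq_mul_left (Nat.pos_of_ne_zero hGne) key).symm
    have : res.range = ⊤ := Subgroup.eq_top_of_card_eq _ (by rw [h4, card_addChar H])
    exact MonoidHom.range_eq_top.mp this
  obtain ⟨ψ, hψ⟩ := hsurj φ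
  exact ⟨ψ, fun h => by rw [← hψ]; rfl⟩

end CharFacts

section Frob

lemma addChar_div_one {M : Type*} [AddCommGroup M] (χ : AddChar M ℂˣ) {a b : M}
    (h : χ a = χ b) : χ (a - b) = 1 := by
  have h2 := χ.map_add_eq_mul (a - b) b
  rw [sub_add_cancel, h] at h2
  have := mul_right_cancel (b := χ b) (a := χ (a - b)) (c := 1)
  exact this (by rw [one_mul, ← h2])

variable {R M : Type*} [Ring R] [Fintype R] [AddCommGroup M] [Fintype M]
  [Module R M] [Module Rᵐᵒᵖ M] [SMulCommClass R Rᵐᵒᵖ M]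
  {χ : AddChar M ℂˣ}

lemma sep_left (hχ : IsGenChar R M χ) {m : M} (h : ∀ r : R, χ (r • m) = 1) : m = 0 := by
  refine eq_zero_of_forall_addChar fun ψ => ?_
  obtain ⟨r, hr⟩ := hχ.2.2.2 ψ
  rw [hr]; exact h r

lemma alpha_inj (hχ : IsGenChar R M χ) {m m' : M}
    (h : ∀ r : R, χ (r • m) = χ (r • m')) : m = m' := by
  rw [← sub_eq_zero]
  refine sep_left hχ fun r => ?_
  rw [smul_sub]
  exact addChar_div_one χ (h r)

/-- the map `m ↦ (r ↦ χ (r • m))` as an additive character valued function -/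
private def alphaChar (χ : AddChar M ℂˣ) (m : M) : AddChar R ℂˣ where
  toFun r := χ (r • m)
  map_zero_eq_one' := by show χ (0 • m) = 1; rw [zero_smul, AddChar.map_zero_eq_one]
  map_add_eq_mul' r s := by
    show χ ((r + s) • m) = χ (r • m) * χ (s • m)
    rw [add_smul, AddChar.map_add_eq_mul]

private def betaChar (χ : AddChar M ℂˣ) (r : R) : AddChar M ℂˣ where
  toFun v := χ (r • v)
  map_zero_eq_one' := by show χ (r • (0 : M)) = 1; rw [smul_zero, AddChar.map_zero_eq_one]
  map_add_eq_mul' v w := by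
    show χ (r • (v + w)) = χ (r • v) * χ (r • w)
    rw [smul_add, AddChar.map_add_eq_mul]

lemma card_M_eq_card_R (hχ : IsGenChar R M χ) : Nat.card M = Nat.card R := by
  have : Bijective (betaChar (R := R) χ) := by
    constructor
    · intro r s h
      exact hχ.2.2.1 (funext fun v => by
        have := congrArg (fun ψ : AddChar M ℂˣ => ψ v) h
        exact this)
    · intro ψ
      obtain ⟨r, hr⟩ := hχ.2.2.2 ψ
      exact ⟨r, (AddChar.ext _ _ fun v => (hr v).symm)⟩
  rw [← card_addChar M]
  exact (Nat.card_congr (Equiv.ofBijective _ this)).symm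

lemma alpha_surj (hχ : IsGenChar R M χ) (ρ : AddChar R ℂˣ) :
    ∃ m : M, ∀ r : R, χ (r • m) = ρ r := by
  haveI : Finite (AddChar R ℂˣ) := addChar_finite R
  have hinj : Injective (alphaChar (R := R) χ) := by
    intro m m' h
    exact alpha_inj hχ fun r => congrArg (fun ψ : AddChar R ℂˣ => ψ r) h
  have hbij : Bijective (alphaChar (R := R) χ) := by
    rw [Nat.bijective_iff_injective_and_card]
    exact ⟨hinj, by rw [card_addChar R, card_M_eq_card_R hχ]⟩
  obtain ⟨m, hm⟩ := hbij.2 ρ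
  exact ⟨m, fun r => congrArg (fun ψ : AddChar R ℂˣ => ψ r) hm⟩

variable {A : Type*} [AddCommGroup A] [Module R A] [Finite A]

lemma hom_ext (hχ : IsGenChar R M χ) {g g' : A →ₗ[R] M}
    (h : ∀ a : A, χ (g a) = χ (g' a)) : g = g' := by
  ext a
  refine alpha_inj hχ fun r => ?_
  rw [← g.map_smul, ← g'.map_smul]
  exact h (r • a)

lemma hom_surj (hχ : IsGenChar R M χ) (ψ : AddChar A ℂˣ) :
    ∃ g : A →ₗ[R] M, ∀ a : A, χ (g a) = ψ a := by
  have hrho : ∀ a : A, ∃ m : M, ∀ r : R, χ (r • m) = ψ (r • a) := by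
    intro a
    exact alpha_surj hχ
      { toFun := fun r => ψ (r • a)
        map_zero_eq_one' := by show ψ ((0 : R) • a) = 1; rw [zero_smul, AddChar.map_zero_eq_one]
        map_add_eq_mul' := fun r s => by
          show ψ ((r + s) • a) = ψ (r • a) * ψ (s • a)
          rw [add_smul, AddChar.map_add_eq_mul] }
  choose Gm hGm using hrho
  have hadd : ∀ a b : A, Gm (a + b) = Gm a + Gm b := by
    intro a b
    refine alpha_inj hχ fun r => ?_
    rw [smul_add, AddChar.map_add_eq_mul, hGm, hGm, hGm, ← AddChar.map_add_eq_mul, ← smul_add]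
  have hsmul : ∀ (s : R) (a : A), Gm (s • a) = s • Gm a := by
    intro s a
    refine alpha_inj hχ fun r => ?_
    rw [hGm, smul_smul, ← mul_smul, hGm]
  refine ⟨{ toFun := Gm, map_add' := hadd, map_smul' := hsmul }, fun a => ?_⟩
  have := hGm a 1
  rwa [one_smul, one_smul] at this

lemma extend_to_M (hχ : IsGenChar R M χ) (C : Submodule R A) (h : C →ₗ[R] M) :
    ∃ g : A →ₗ[R] M, ∀ c : C, g c = h c := by
  let φ : AddChar C.toAddSubgroup ℂˣ :=
    { toFun := fun c => χ (h ⟨c.1, c.2⟩)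
      map_zero_eq_one' := by
        show χ (h ⟨(0 : C.toAddSubgroup).1, _⟩) = 1
        have : (⟨(0 : C.toAddSubgroup).1, (0 : C.toAddSubgroup).2⟩ : C) = 0 := rfl
        rw [this, h.map_zero, AddChar.map_zero_eq_one]
      map_add_eq_mul' := fun c d => by
        show χ (h ⟨(c + d).1, _⟩) = χ (h ⟨c.1, c.2⟩) * χ (h ⟨d.1, d.2⟩)
        have : (⟨(c + d).1, (c + d).2⟩ : C) = ⟨c.1, c.2⟩ + ⟨d.1, d.2⟩ := rfl
        rw [this, h.map_add, AddChar.map_add_eq_mul] }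
  obtain ⟨ψ, hψ⟩ := addChar_extend C.toAddSubgroup φ
  obtain ⟨g, hg⟩ := hom_surj hχ ψ
  have key : g.comp C.subtype = h := by
    refine hom_ext hχ fun c => ?_
    rw [LinearMap.comp_apply, Submodule.coe_subtype, hg]
    exact hψ ⟨c.1, c.2⟩
  exact ⟨g, fun c => by rw [← key]; rfl⟩

lemma extend_to_pi (hχ : IsGenChar R M χ) (n : ℕ) (C : Submodule R (Fin n → M))
    (h : C →ₗ[R] (Fin n → M)) :
    ∃ g : (Fin n → M) →ₗ[R] (Fin n → M), ∀ c : C, g c = h c := by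
  choose gj hgj using fun j => extend_to_M hχ C ((LinearMap.proj j).comp h)
  refine ⟨LinearMap.pi gj, fun c => funext fun j => ?_⟩
  rw [LinearMap.pi_apply, hgj j c]
  rfl

end Frob



section Auto

variable {R X : Type*} [Ring R] [AddCommGroup X] [Module R X] [Finite X]

/-- one-step strict extension of an injective map, assuming the extension property -/
lemma step_extend
    (E : ∀ (C : Submodule R X) (h : C →ₗ[R] X), ∃ g : X →ₗ[R] X, ∀ c : C, g c = h c)
    (C : Submodule R X) (hC : C ≠ ⊤) (f : C →ₗ[R] X) (hf : Injective f) :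
    ∃ (C₁ : Submodule R X) (hlt : C < C₁) (f₁ : C₁ →ₗ[R] X), Injective f₁ ∧
      ∀ c : C, f₁ (Submodule.inclusion hlt.le c) = f c := by
  haveI : Finite (Submodule R X) :=
    Finite.of_injective (fun p : Submodule R X => (p : Set X)) SetLike.coe_injective
  -- a minimal submodule strictly above C
  obtain ⟨C₁, hC₁, hmin⟩ : ∃ C₁ ∈ {D : Submodule R X | C < D}, ∀ a' ∈ {D : Submodule R X | C < D},
      id a' ≤ id C₁ → id C₁ = id a' := by
    obtain ⟨m, hm⟩ := (Set.toFinite {D : Submodule R X | C < D}).exists_minimal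
      ⟨⊤, lt_of_le_of_ne le_top hC⟩
    exact ⟨m, hm.1, fun a ha hle => le_antisymm (hm.2 ha hle) hle⟩
  simp only [id] at hmin
  obtain ⟨g, hg⟩ := E C f
  by_cases hker : Injective (g.comp C₁.subtype)
  · exact ⟨C₁, hC₁, g.comp C₁.subtype, hker, fun c => by
      rw [LinearMap.comp_apply, Submodule.coe_subtype]
      exact hg c⟩
  -- the kernel K (viewed in X)
  set K : Submodule R X := (LinearMap.ker (g.comp C₁.subtype)).map C₁.subtype with hK
  have hKX : ∀ x ∈ K, g x = 0 := by
    rintro x ⟨y, hy, rfl⟩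
    exact hy
  have hKC₁ : K ≤ C₁ := by
    rintro x ⟨y, hy, rfl⟩
    exact y.2
  have hKbot : K ≠ ⊥ := by
    intro h
    apply hker
    intro a b hab
    have : a - b ∈ LinearMap.ker (g.comp C₁.subtype) := by
      rw [LinearMap.mem_ker, map_sub, hab, sub_self]
    have : C₁.subtype (a - b) ∈ K := ⟨a - b, this, rfl⟩
    rw [h, Submodule.mem_bot] at this
    have : a - b = 0 := Subtype.ext (by simpa using this)
    rwa [sub_eq_zero] at this
  have hKC : K ⊓ C = ⊥ := by
    rw [eq_bot_iff]
    rintro x ⟨hxK, hxC⟩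
    have h1 : g x = 0 := hKX x hxK
    have h2 : g x = f ⟨x, hxC⟩ := hg ⟨x, hxC⟩
    have : f ⟨x, hxC⟩ = 0 := by rw [← h2, h1]
    have : (⟨x, hxC⟩ : C) = 0 := hf (by rw [this, map_zero])
    simpa using congrArg Subtype.val this
  -- C ⊔ b = C₁ for any nonzero b ≤ K
  have hsup : ∀ b : Submodule R X, b ≤ K → b ≠ ⊥ → C ⊔ b = C₁ := by
    intro b hbK hbbot
    have h1 : C < C ⊔ b := by
      refine lt_of_le_of_ne le_sup_left fun h => ?_
      have hble : b ≤ C := h ▸ le_sup_right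
      apply hbbot
      rw [eq_bot_iff, ← hKC]
      exact le_inf hbK hble
    have h2 : C ⊔ b ≤ C₁ := sup_le hC₁.le (hbK.trans hKC₁)
    exact le_antisymm h2 (hmin (C ⊔ b) h1 h2).le
  have hCK : C ⊔ K = C₁ := hsup K le_rfl hKbot
  -- K is an atom
  have hatom : IsAtom K := by
    constructor
    · exact hKbot
    · intro b hb
      by_contra hbbot
      have hsupb : C ⊔ b = C₁ := hsup b hb.le hbbot
      have hKb : K ≤ b := by
        intro k hk
        have hk1 : k ∈ C ⊔ b := by rw [hsupb]; exact hKC₁ hk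
        obtain ⟨c, hc, y, hy, hcy⟩ := Submodule.mem_sup.mp hk1
        have hyK : y ∈ K := hb.le hy
        have hcK : c ∈ K ⊓ C := by
          refine ⟨?_, hc⟩
          have hc' : c = k - y := eq_sub_of_add_eq hcy
          rw [hc']
          exact K.sub_mem hk hyK
        rw [hKC, Submodule.mem_bot] at hcK
        have hky : k = y := by rw [← hcy, hcK, zero_add]
        rw [hky]
        exact hy
      exact hb.ne (le_antisymm hb.le hKb)
  haveI hsimple : IsSimpleModule R K := isSimpleModule_iff_isAtom.mpr hatom
  -- there is θ : K →ₗ X whose range is not inside D := range f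
  set D : Submodule R X := LinearMap.range f with hD
  have htheta : ∃ θ : K →ₗ[R] X, ¬ (LinearMap.range θ ≤ D) := by
    by_contra hall
    push_neg at hall
    haveI : Finite (K →ₗ[R] X) :=
      Finite.of_injective (fun θ : K →ₗ[R] X => (θ : K → X)) DFunLike.coe_injective
    set e : C ≃ₗ[R] D := LinearEquiv.ofInjective f hf with he
    set T : (K →ₗ[R] X) → (K →ₗ[R] X) := fun θ =>
      C.subtype ∘ₗ (e.symm.toLinearMap ∘ₗ θ.codRestrict D (fun k => hall θ ⟨k, rfl⟩)) with hT
    have hTinj : Injective T := by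
      intro θ₁ θ₂ h
      ext k
      have h1 := congrArg (fun u : K →ₗ[R] X => u k) h
      simp only [hT, LinearMap.comp_apply, Submodule.coe_subtype] at h1
      have h2 := e.symm.injective (Subtype.ext h1)
      exact congrArg Subtype.val h2
    have hTsurj : Surjective T := (Finite.injective_iff_bijective.mp hTinj).2
    obtain ⟨θ, hθ⟩ := hTsurj K.subtype
    have hrange : LinearMap.range (K.subtype) ≤ C := by
      rw [← hθ]
      rintro x ⟨k, rfl⟩
      exact (e.symm _).2
    rw [Submodule.range_subtype] at hrange
    apply hKbot
    rw [eq_bot_iff, ← hKC]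
    exact le_inf le_rfl hrange
  obtain ⟨θ, hθ⟩ := htheta
  have hθ0 : θ ≠ 0 := fun h => hθ (by rw [h]; simp)
  have hθinj : Injective θ := LinearMap.injective_of_ne_zero hθ0
  have hrangeD : LinearMap.range θ ⊓ D = ⊥ := by
    haveI : IsSimpleModule R (LinearMap.range θ) :=
      IsSimpleModule.congr (LinearEquiv.ofInjective θ hθinj).symm
    have hat : IsAtom (LinearMap.range θ) := isSimpleModule_iff_isAtom.mp this
    rcases lt_or_eq_of_le (inf_le_left : LinearMap.range θ ⊓ D ≤ LinearMap.range θ) with h | h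
    · exact hat.2 _ h
    · exact absurd (h ▸ inf_le_right) hθ
  -- assemble the map on C₁ = C ⊕ K
  have hCleC₁ : C ≤ C₁ := hC₁.le
  set p : Submodule R C₁ := Submodule.comap C₁.subtype C with hp
  set q : Submodule R C₁ := Submodule.comap C₁.subtype K with hq
  have hcompl : IsCompl p q := by
    constructor
    · rw [disjoint_iff, eq_bot_iff]
      rintro x ⟨hxp, hxq⟩
      have : (x : X) ∈ K ⊓ C := ⟨hxq, hxp⟩
      rw [hKC, Submodule.mem_bot] at this
      exact (Submodule.mem_bot R).mpr (Subtype.ext this)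
    · rw [codisjoint_iff, eq_top_iff]
      rintro x -
      have : (x : X) ∈ C ⊔ K := by rw [hCK]; exact x.2
      obtain ⟨c, hc, k, hk, hck⟩ := Submodule.mem_sup.mp this
      refine Submodule.mem_sup.mpr ⟨⟨c, hCleC₁ hc⟩, ?_, ⟨k, hKC₁ hk⟩, ?_, ?_⟩
      · exact hc
      · exact hk
      · exact Subtype.ext hck
  set eP : p ≃ₗ[R] C := Submodule.comapSubtypeEquivOfLe hCleC₁ with heP
  set eQ : q ≃ₗ[R] K := Submodule.comapSubtypeEquivOfLe hKC₁ with heQ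
  set F : (p × q) →ₗ[R] X := (f ∘ₗ eP.toLinearMap).coprod (θ ∘ₗ eQ.toLinearMap) with hF
  set f₁ : C₁ →ₗ[R] X := F ∘ₗ (Submodule.prodEquivOfIsCompl p q hcompl).symm.toLinearMap
    with hf₁
  have hFval : ∀ (a : p) (b : q), F (a, b) = f (eP a) + θ (eQ b) := fun a b => rfl
  have hker0 : ∀ z : p × q, F z = 0 → z = 0 := by
    rintro ⟨a, b⟩ hz
    rw [hFval] at hz
    have h1 : f (eP a) = - θ (eQ b) := by rw [eq_neg_iff_add_eq_zero]; exact hz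
    have h2 : f (eP a) ∈ LinearMap.range θ ⊓ D := by
      refine ⟨?_, ⟨eP a, rfl⟩⟩
      rw [h1]
      exact ⟨- eQ b, by rw [map_neg]⟩
    rw [hrangeD, Submodule.mem_bot] at h2
    have ha : a = 0 := by
      have := hf (by rw [h2, map_zero] : f (eP a) = f 0)
      have := eP.injective (by rw [this, map_zero] : eP a = eP 0)
      exact this
    have hb : b = 0 := by
      have hθb : θ (eQ b) = 0 := by rw [← neg_eq_zero, ← h1, h2]
      have := hθinj (by rw [hθb, map_zero] : θ (eQ b) = θ 0)
      exact eQ.injective (by rw [this, map_zero])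
    rw [ha, hb]
    rfl
  have hFinj : Injective F := by
    intro z₁ z₂ hzz
    have h0 : F (z₁ - z₂) = 0 := by rw [map_sub, hzz, sub_self]
    have := hker0 _ h0
    rwa [sub_eq_zero] at this
  refine ⟨C₁, hC₁, f₁, ?_, ?_⟩
  · exact hFinj.comp (Submodule.prodEquivOfIsCompl p q hcompl).symm.injective
  · intro c
    set x : C₁ := Submodule.inclusion hCleC₁ c with hx
    have hxc : (x : X) = (c : X) := rfl
    have hxp : x ∈ p := by
      show (x : X) ∈ C
      rw [hxc]; exact c.2
    have hsymm := Submodule.prodEquivOfIsCompl_symm_apply_left (p := p) (q := q) hcompl ⟨x, hxp⟩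
    have hthis : f₁ x = f (eP (⟨x, hxp⟩ : p)) + θ (eQ 0) := by
      rw [hf₁, LinearMap.comp_apply, LinearEquiv.coe_coe]
      rw [show ((Submodule.prodEquivOfIsCompl p q hcompl).symm x) = ((⟨x, hxp⟩ : p), 0)
        from hsymm]
      exact hFval _ _
    rw [hthis, map_zero, map_zero, add_zero]
    have heq : eP (⟨x, hxp⟩ : p) = c := Subtype.ext (by
      rw [Submodule.comapSubtypeEquivOfLe_apply_coe]
      exact hxc)
    rw [heq]

end Auto

section Auto2
variable {R X : Type*} [Ring R] [AddCommGroup X] [Module R X] [Finite X]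

lemma extend_to_auto
    (E : ∀ (C : Submodule R X) (h : C →ₗ[R] X), ∃ g : X →ₗ[R] X, ∀ c : C, g c = h c)
    (C : Submodule R X) (f : C →ₗ[R] X) (hf : Injective f) :
    ∃ g : X ≃ₗ[R] X, ∀ c : C, g (c : X) = f c := by
  suffices H : ∀ (k : ℕ) (C : Submodule R X) (f : C →ₗ[R] X), Injective f →
      Nat.card X - Nat.card C ≤ k → ∃ g : X ≃ₗ[R] X, ∀ c : C, g (c : X) = f c by
    exact H (Nat.card X - Nat.card C) C f hf le_rfl
  intro k
  induction k with
  | zero =>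
    intro C f hf hcard
    have hCtop : C = ⊤ := by
      by_contra hne
      have hlt : (C : Set X) ⊂ ((⊤ : Submodule R X) : Set X) := by
        refine ssubset_of_subset_of_ne (fun x _ => trivial) ?_
        intro h
        exact hne (SetLike.coe_injective h)
      have h1 : Nat.card C < Nat.card X := by
        have e1 := Nat.card_coe_set_eq (C : Set X)
        have e2 : ((⊤ : Submodule R X) : Set X).ncard ≤ Nat.card X := by
          rw [← Nat.card_coe_set_eq]
          exact Nat.card_le_card_of_injective _ Subtype.val_injective
        have e3 := Set.ncard_lt_ncard hlt (Set.toFinite _)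
        have e4 : Nat.card C = ((C : Set X)).ncard := e1
        omega
      omega
    subst hCtop
    set g₀ : X →ₗ[R] X := f ∘ₗ (LinearEquiv.ofTop ⊤ rfl).symm.toLinearMap with hg₀
    have hg₀inj : Injective g₀ := hf.comp (LinearEquiv.ofTop ⊤ rfl).symm.injective
    have hg₀bij : Bijective g₀ := Finite.injective_iff_bijective.mp hg₀inj
    refine ⟨LinearEquiv.ofBijective g₀ hg₀bij, fun c => ?_⟩
    have hsy : (LinearEquiv.ofTop (⊤ : Submodule R X) rfl).symm (c : X) = c := by
      apply (LinearEquiv.ofTop (⊤ : Submodule R X) rfl).injective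
      rw [LinearEquiv.apply_symm_apply]
      rfl
    show f ((LinearEquiv.ofTop (⊤ : Submodule R X) rfl).symm (c : X)) = f c
    rw [hsy]
  | succ k ih =>
    intro C f hf hcard
    by_cases hCtop : C = ⊤
    · subst hCtop
      set g₀ : X →ₗ[R] X := f ∘ₗ (LinearEquiv.ofTop ⊤ rfl).symm.toLinearMap with hg₀
      have hg₀inj : Injective g₀ := hf.comp (LinearEquiv.ofTop ⊤ rfl).symm.injective
      have hg₀bij : Bijective g₀ := Finite.injective_iff_bijective.mp hg₀inj
      refine ⟨LinearEquiv.ofBijective g₀ hg₀bij, fun c => ?_⟩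
      have hsy : (LinearEquiv.ofTop (⊤ : Submodule R X) rfl).symm (c : X) = c := by
        apply (LinearEquiv.ofTop (⊤ : Submodule R X) rfl).injective
        rw [LinearEquiv.apply_symm_apply]
        rfl
      show f ((LinearEquiv.ofTop (⊤ : Submodule R X) rfl).symm (c : X)) = f c
      rw [hsy]
    · obtain ⟨C₁, hlt, f₁, hf₁, hcompat⟩ := step_extend E C hCtop f hf
      have hcard1 : Nat.card C < Nat.card C₁ := by
        have e1 : Nat.card C = ((C : Set X)).ncard := Nat.card_coe_set_eq _
        have e2 : Nat.card C₁ = ((C₁ : Set X)).ncard := Nat.card_coe_set_eq _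
        have hss : (C : Set X) ⊂ (C₁ : Set X) := by
          rw [Set.ssubset_iff_subset_ne]
          exact ⟨fun x hx => hlt.le hx, fun h => hlt.ne (SetLike.coe_injective h)⟩
        have e3 := Set.ncard_lt_ncard hss (Set.toFinite _)
        omega
      have hcard2 : Nat.card C₁ ≤ Nat.card X :=
        Nat.card_le_card_of_injective _ Subtype.val_injective
      obtain ⟨g, hg⟩ := ih C₁ f₁ hf₁ (by omega)
      refine ⟨g, fun c => ?_⟩
      have := hg (Submodule.inclusion hlt.le c)
      rw [hcompat c] at this
      exact this
end Auto2

section MatrixRep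

variable {R M : Type*} [Ring R] [Fintype R] [AddCommGroup M] [Fintype M]
  [Module R M] [Module Rᵐᵒᵖ M] [SMulCommClass R Rᵐᵒᵖ M]
  {χ : AddChar M ℂˣ}

variable {n : ℕ}

lemma exists_matrix_rep (hχ : IsGenChar R M χ) (h : (Fin n → M) →ₗ[R] (Fin n → M)) :
    ∃ A : Matrix (Fin n) (Fin n) R, ∀ (x : Fin n → M) (j : Fin n),
      h x j = ∑ i, op (A i j) • x i := by
  have key : ∀ i j : Fin n, ∃ r : R, ∀ v : M, h (Pi.single i v) j = op r • v := by
    intro i j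
    set φ : M →ₗ[R] M :=
      (LinearMap.proj j) ∘ₗ h ∘ₗ (LinearMap.single R (fun _ : Fin n => M) i) with hφ
    have hφval : ∀ v : M, φ v = h (Pi.single i v) j := fun v => rfl
    obtain ⟨r, hr⟩ := hχ.2.1
      { toFun := fun v => χ (φ v)
        map_zero_eq_one' := by show χ (φ 0) = 1; rw [map_zero, AddChar.map_zero_eq_one]
        map_add_eq_mul' := fun v w => by
          show χ (φ (v + w)) = χ (φ v) * χ (φ w)
          rw [map_add, AddChar.map_add_eq_mul] }
    refine ⟨r, fun v => ?_⟩
    rw [← hφval]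
    rw [← sub_eq_zero]
    refine sep_left hχ fun s => ?_
    have h1 : s • (φ v - op r • v) = φ (s • v) - op r • (s • v) := by
      rw [smul_sub, φ.map_smul, smul_comm s (op r) v]
    rw [h1]
    exact addChar_div_one χ (hr (s • v))
  choose A hA using key
  refine ⟨Matrix.of A, fun x j => ?_⟩
  conv_lhs => rw [← Finset.univ_sum_single x]
  rw [map_sum, Finset.sum_apply]
  exact Finset.sum_congr rfl fun i _ => hA i j (x i)

lemma single_rep_sum (A : Matrix (Fin n) (Fin n) R) (i j : Fin n) (v : M) :
    ∑ i', op (A i' j) • Pi.single i v i' = op (A i j) • v := by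
  rw [Finset.sum_eq_single i (fun b _ hb => by rw [Pi.single_eq_of_ne hb, smul_zero])
    (fun hi => absurd (Finset.mem_univ i) hi)]
  rw [Pi.single_eq_same]

lemma rep_unique (hχ : IsGenChar R M χ) {A B : Matrix (Fin n) (Fin n) R}
    (h : ∀ (x : Fin n → M) (j : Fin n), ∑ i, op (A i j) • x i = ∑ i, op (B i j) • x i) :
    A = B := by
  funext i j
  refine hχ.1 (funext fun v => ?_)
  show χ (op (A i j) • v) = χ (op (B i j) • v)
  congr 1
  rw [← single_rep_sum A i j v, ← single_rep_sum B i j v]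
  exact h (Pi.single i v) j

lemma rep_id (x : Fin n → M) (j : Fin n) :
    ∑ i, op ((1 : Matrix (Fin n) (Fin n) R) i j) • x i = x j := by
  rw [Finset.sum_eq_single j
    (fun b _ hb => by rw [Matrix.one_apply_ne hb, op_zero, zero_smul])
    (fun hj => absurd (Finset.mem_univ j) hj)]
  rw [Matrix.one_apply_eq, op_one, one_smul]

lemma rep_comp {h₁ h₂ : (Fin n → M) →ₗ[R] (Fin n → M)} {A B : Matrix (Fin n) (Fin n) R}
    (hA : ∀ (x : Fin n → M) (j : Fin n), h₁ x j = ∑ i, op (A i j) • x i)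
    (hB : ∀ (x : Fin n → M) (j : Fin n), h₂ x j = ∑ i, op (B i j) • x i)
    (x : Fin n → M) (j : Fin n) :
    h₂ (h₁ x) j = ∑ i, op ((A * B) i j) • x i := by
  rw [hB (h₁ x) j]
  have step1 : ∀ l, op (B l j) • (h₁ x) l = ∑ i, op (A i l * B l j) • x i := by
    intro l
    rw [hA x l, Finset.smul_sum]
    exact Finset.sum_congr rfl fun i _ => by
      rw [smul_smul, ← op_mul]
  calc ∑ l, op (B l j) • (h₁ x) l = ∑ l, ∑ i, op (A i l * B l j) • x i :=
        Finset.sum_congr rfl fun l _ => step1 l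
    _ = ∑ i, ∑ l, op (A i l * B l j) • x i := Finset.sum_comm
    _ = ∑ i, op ((A * B) i j) • x i := by
        refine Finset.sum_congr rfl fun i _ => ?_
        rw [Matrix.mul_apply]
        rw [← Finset.sum_smul]
        congr 1
        exact (map_sum (opAddEquiv : R ≃+ Rᵐᵒᵖ) (fun l => A i l * B l j) Finset.univ).symm
end MatrixRep


/-- Let `M` be a finite Frobenius bimodule over a finite ring `R`, `C ⊆ M^n` a left
`R`-submodule, and `f : C → M^n` an injective left `R`-linear map.  Then `f` extends to a
left `R`-linear automorphism of `M^n`: there is `U ∈ GL_n(R)` with `f(x) = xU` for all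
`x ∈ C`. -/
theorem injective_extends_to_automorphism
    (R M : Type*) [Ring R] [Fintype R] [AddCommGroup M] [Fintype M]
    [Module R M] [Module Rᵐᵒᵖ M] [SMulCommClass R Rᵐᵒᵖ M]
    (hM : IsFrobeniusBimodule R M)
    (n : ℕ) (C : Submodule R (Fin n → M)) (f : C →ₗ[R] (Fin n → M))
    (hf : Function.Injective f) :
    ∃ U : (Matrix (Fin n) (Fin n) R)ˣ, ∀ x : C, ∀ j : Fin n,
      f x j = ∑ i : Fin n, op (U.val i j) • (x : Fin n → M) i := by
  obtain ⟨χ, hχ⟩ := hM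
  obtain ⟨g, hg⟩ := extend_to_auto (fun D h => extend_to_pi hχ n D h) C f hf
  obtain ⟨U', hU⟩ := exists_matrix_rep hχ (g : (Fin n → M) →ₗ[R] (Fin n → M))
  obtain ⟨V', hV⟩ := exists_matrix_rep hχ (g.symm : (Fin n → M) →ₗ[R] (Fin n → M))
  have hUV : U' * V' = 1 := by
    refine rep_unique hχ fun x j => ?_
    have h1 := rep_comp hU hV x j
    calc ∑ i, op ((U' * V') i j) • x i
        = (g.symm : (Fin n → M) →ₗ[R] (Fin n → M))
            ((g : (Fin n → M) →ₗ[R] (Fin n → M)) x) j := h1.symm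
      _ = x j := by simp
      _ = ∑ i, op ((1 : Matrix (Fin n) (Fin n) R) i j) • x i := (rep_id x j).symm
  have hVU : V' * U' = 1 := by
    refine rep_unique hχ fun x j => ?_
    have h1 := rep_comp hV hU x j
    calc ∑ i, op ((V' * U') i j) • x i
        = (g : (Fin n → M) →ₗ[R] (Fin n → M))
            ((g.symm : (Fin n → M) →ₗ[R] (Fin n → M)) x) j := h1.symm
      _ = x j := by simp
      _ = ∑ i, op ((1 : Matrix (Fin n) (Fin n) R) i j) • x i := (rep_id x j).symm
  refine ⟨⟨U', V', hUV, hVU⟩, fun x j => ?_⟩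
  have hgx : g ((x : Fin n → M)) = f x := hg x
  calc f x j = g ((x : Fin n → M)) j := by rw [hgx]
    _ = ∑ i, op (U' i j) • (x : Fin n → M) i := hU _ j
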